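/- For every integer k ≥ 3 there is a constant C > 0 such that for all integers q ≥ k and e ≥ 1, every 1-(q,k)-system consisting of e q-cliques has chromatic number at most C · e^{1/(2k−2)} · q. -/

import Mathlib

/-- `𝒜` is a family of `q`-element vertex sets (`q`-cliques) that pairwise share at most `ℓ`
vertices.  The associated `k`-uniform hypergraph (an `ℓ`-`(q,k)`-system) has as edges all
`k`-element subsets of members of `𝒜`. -/
def IsSystem {V : Type*} [DecidableEq V] (ℓ q : ℕ) (𝒜 : Finset (Finset V)) : Prop :=
  (∀ A ∈ 𝒜, A.card = q) ∧
    ∀ A ∈ 𝒜, ∀ B ∈ 𝒜, A ≠ B → (A ∩ B).card ≤ ℓ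

/-- The `k`-uniform hypergraph whose edges are all `k`-element subsets of members of `𝒜`
admits a proper coloring with `n` colors: no edge is monochromatic. -/
def SysColorable {V : Type*} (k n : ℕ) (𝒜 : Finset (Finset V)) : Prop :=
  ∃ χ : V → Fin n, ∀ A ∈ 𝒜, ∀ S ⊆ A, S.card = k → ∃ u ∈ S, ∃ w ∈ S, χ u ≠ χ w

open Finset

section Aux

/-- A coloring is constant (monochromatic) on a finset. -/
def monoOn {V : Type*} (c : V → ℕ) (S : Finset V) : Prop := ∀ u ∈ S, ∀ w ∈ S, c u = c w

instance {V : Type*} (c : V → ℕ) (S : Finset V) : Decidable (monoOn c S) := by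
  unfold monoOn; infer_instance

variable {V : Type} [DecidableEq V]

/-- Monochromatic `k`-subsets of `A ∩ U` under coloring `c`. -/
def badS (k : ℕ) (c : V → ℕ) (U A : Finset V) : Finset (Finset V) :=
  ((A ∩ U).powersetCard k).filter (fun S => monoOn c S)

/-- Potential function: number of `k`-subsets of traces of cliques on `U`. -/
def Phi (k : ℕ) (𝒜 : Finset (Finset V)) (U : Finset V) : ℕ :=
  ∑ A ∈ 𝒜, ((A ∩ U).card.choose k)

lemma two_mul_choose_two (n : ℕ) : 2 * n.choose 2 = n * (n - 1) := by
  rw [Nat.choose_two_right, Nat.mul_div_cancel' (Nat.even_mul_pred_self n).two_dvd]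

lemma choose_upper (k s q : ℕ) (hk : 2 ≤ k) (hsq : s ≤ q) :
    2 * s.choose k ≤ (2 * s.choose 2) * q ^ (k - 2) := by
  obtain ⟨j, rfl⟩ : ∃ j, k = j + 2 := ⟨k - 2, by omega⟩
  have h1 : 2 * s.choose (j + 2) ≤ s.descFactorial (j + 2) := by
    rw [Nat.descFactorial_eq_factorial_mul_choose]
    exact Nat.mul_le_mul_right _ (le_trans (by omega) (Nat.self_le_factorial _))
  refine h1.trans ?_
  rw [two_mul_choose_two]
  have hexp : j + 2 - 2 = j := by omega
  rw [hexp]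
  match s, hsq with
  | 0, _ => simp [Nat.zero_descFactorial_succ]
  | 1, _ => simp [Nat.succ_descFactorial_succ, Nat.zero_descFactorial_succ]
  | (a+2), hsq =>
    rw [Nat.succ_descFactorial_succ, Nat.succ_descFactorial_succ]
    have h2 : a.descFactorial j ≤ q ^ j :=
      (Nat.descFactorial_le_pow _ _).trans (Nat.pow_le_pow_left (by omega) _)
    have hc : a + 2 - 1 = a + 1 := by omega
    rw [hc]
    calc (a+2) * ((a+1) * a.descFactorial j) ≤ (a+2) * ((a+1) * q ^ j) :=
          Nat.mul_le_mul_left _ (Nat.mul_le_mul_left _ h2)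
      _ = (a + 2) * (a + 1) * q ^ j := by ring



lemma exists_coloring (k t : ℕ) (ht : 1 ≤ t) (hk : 1 ≤ k)
    (𝒜 : Finset (Finset V)) (U : Finset V) :
    ∃ c : V → ℕ, (∀ v, c v < t) ∧
      t ^ (k - 1) * ∑ A ∈ 𝒜, (badS k c U A).card ≤ Phi k 𝒜 U := by
  classical
  set F : Finset ((a : V) → a ∈ U → ℕ) := U.pi (fun _ => Finset.range t) with hF
  have hFne : F.Nonempty := ⟨fun _ _ => 0, Finset.mem_pi.2 fun a ha => Finset.mem_range.2 ht⟩
  have hFcard : F.card = t ^ U.card := by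
    rw [hF, Finset.card_pi, Finset.prod_congr rfl (fun a _ => Finset.card_range t),
      Finset.prod_const]
  set cf : ((a : V) → a ∈ U → ℕ) → V → ℕ :=
    fun f v => if h : v ∈ U then f v h else 0 with hcf
  -- per (A,S) bound
  have key : ∀ A ∈ 𝒜, ∀ S ∈ (A ∩ U).powersetCard k,
      t ^ (k - 1) * (F.filter (fun f => monoOn (cf f) S)).card ≤ F.card := by
    intro A hA S hSmem
    obtain ⟨hSsub, hScard⟩ := Finset.mem_powersetCard.1 hSmem
    have hSU : S ⊆ U := hSsub.trans inter_subset_right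
    have hSne : S.Nonempty := Finset.card_pos.1 (by omega)
    obtain ⟨v₀, hv₀⟩ := hSne
    have herase : S.erase v₀ ⊆ U := (Finset.erase_subset _ _).trans hSU
    set D : Finset V := U \ (S.erase v₀) with hD
    have hDU : D ⊆ U := Finset.sdiff_subset
    have hDcard : D.card = U.card - (k - 1) := by
      rw [hD, Finset.card_sdiff_of_subset herase, Finset.card_erase_of_mem hv₀, hScard]
    have hmain : (F.filter (fun f => monoOn (cf f) S)).card ≤ t ^ D.card := by
      have : (F.filter (fun f => monoOn (cf f) S)).card ≤ (D.pi (fun _ => Finset.range t)).card := by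
        apply Finset.card_le_card_of_injOn (fun f a ha => f a (hDU ha))
        · intro f hf
          rw [Finset.mem_coe, Finset.mem_filter] at hf
          exact Finset.mem_pi.2 fun a ha => (Finset.mem_pi.1 hf.1) a (hDU ha)
        · intro f hf g hg hfg
          rw [Finset.mem_coe, Finset.mem_filter] at hf hg
          have hv₀U : v₀ ∈ U := hSU hv₀
          have hv₀D : v₀ ∈ D := Finset.mem_sdiff.2 ⟨hv₀U, Finset.notMem_erase _ _⟩
          have h00 : f v₀ hv₀U = g v₀ hv₀U := by
            have := congrFun (congrFun hfg v₀) hv₀D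
            exact this
          funext a ha
          by_cases haS : a ∈ S.erase v₀
          · have haSS : a ∈ S := Finset.mem_of_mem_erase haS
            have hfa : cf f a = cf f v₀ := hf.2 a haSS v₀ hv₀
            have hga : cf g a = cf g v₀ := hg.2 a haSS v₀ hv₀
            have e1 : cf f a = f a ha := by simp [hcf, ha]
            have e2 : cf g a = g a ha := by simp [hcf, ha]
            have e3 : cf f v₀ = f v₀ hv₀U := by simp [hcf, hv₀U]
            have e4 : cf g v₀ = g v₀ hv₀U := by simp [hcf, hv₀U]
            rw [← e1, hfa, e3, h00, ← e4, ← hga, e2]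
          · have haD : a ∈ D := Finset.mem_sdiff.2 ⟨ha, haS⟩
            exact congrFun (congrFun hfg a) haD
      refine this.trans ?_
      rw [Finset.card_pi, Finset.prod_congr rfl (fun a _ => Finset.card_range t),
        Finset.prod_const]
    calc t ^ (k - 1) * (F.filter (fun f => monoOn (cf f) S)).card
        ≤ t ^ (k - 1) * t ^ D.card := Nat.mul_le_mul_left _ hmain
      _ = t ^ ((k - 1) + (U.card - (k - 1))) := by rw [hDcard, pow_add]
      _ = t ^ U.card := by
          congr 1
          have hkU : k ≤ U.card := hScard ▸ Finset.card_le_card hSU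
          omega
      _ = F.card := hFcard.symm
  -- averaging
  have havg : ∑ f ∈ F, (t ^ (k - 1) * ∑ A ∈ 𝒜, (badS k (cf f) U A).card)
      ≤ ∑ _f ∈ F, Phi k 𝒜 U := by
    have hswap : ∑ f ∈ F, ∑ A ∈ 𝒜, (badS k (cf f) U A).card
        = ∑ A ∈ 𝒜, ∑ S ∈ (A ∩ U).powersetCard k, (F.filter (fun f => monoOn (cf f) S)).card := by
      rw [Finset.sum_comm]
      refine Finset.sum_congr rfl fun A _ => ?_
      have : ∀ f, (badS k (cf f) U A).card
          = ∑ S ∈ (A ∩ U).powersetCard k, (if monoOn (cf f) S then 1 else 0) := by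
        intro f; rw [badS, Finset.card_filter]
      rw [Finset.sum_congr rfl fun f _ => this f, Finset.sum_comm]
      refine Finset.sum_congr rfl fun S _ => ?_
      rw [Finset.card_filter]
    calc ∑ f ∈ F, (t ^ (k - 1) * ∑ A ∈ 𝒜, (badS k (cf f) U A).card)
        = t ^ (k - 1) * ∑ f ∈ F, ∑ A ∈ 𝒜, (badS k (cf f) U A).card := by
          rw [Finset.mul_sum]
      _ = ∑ A ∈ 𝒜, ∑ S ∈ (A ∩ U).powersetCard k,
            t ^ (k - 1) * (F.filter (fun f => monoOn (cf f) S)).card := by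
          rw [hswap, Finset.mul_sum]
          exact Finset.sum_congr rfl fun A _ => by rw [Finset.mul_sum]
      _ ≤ ∑ A ∈ 𝒜, ∑ S ∈ (A ∩ U).powersetCard k, F.card := by
          exact Finset.sum_le_sum fun A hA => Finset.sum_le_sum fun S hS => key A hA S hS
      _ = ∑ A ∈ 𝒜, ((A ∩ U).card.choose k) * F.card := by
          exact Finset.sum_congr rfl fun A _ => by
            rw [Finset.sum_const, smul_eq_mul, Finset.card_powersetCard]
      _ = Phi k 𝒜 U * F.card := by rw [Phi, Finset.sum_mul]
      _ = ∑ _f ∈ F, Phi k 𝒜 U := by rw [Finset.sum_const, smul_eq_mul, mul_comm]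
  obtain ⟨f, hfF, hfle⟩ := Finset.exists_le_of_sum_le hFne havg
  refine ⟨cf f, ?_, hfle⟩
  intro v
  by_cases hv : v ∈ U
  · have := (Finset.mem_pi.1 hfF) v hv
    simpa [hcf, hv] using Finset.mem_range.1 this
  · simpa [hcf, hv] using Nat.lt_of_lt_of_le Nat.zero_lt_one ht

lemma pairs_bound (q : ℕ) (𝒜 : Finset (Finset V)) (hsys : IsSystem 1 q 𝒜) (W : Finset V) :
    ∑ A ∈ 𝒜, ((A ∩ W).card.choose 2) ≤ W.card.choose 2 := by
  classical
  have hdisj : ∀ A ∈ 𝒜, ∀ B ∈ 𝒜, A ≠ B →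
      Disjoint ((A ∩ W).powersetCard 2) ((B ∩ W).powersetCard 2) := by
    intro A hA B hB hAB
    rw [Finset.disjoint_left]
    intro T hTA hTB
    obtain ⟨hTA', hT2⟩ := Finset.mem_powersetCard.1 hTA
    obtain ⟨hTB', _⟩ := Finset.mem_powersetCard.1 hTB
    have hsub : T ⊆ A ∩ B :=
      fun x hx => Finset.mem_inter.2 ⟨(Finset.mem_inter.1 (hTA' hx)).1,
        (Finset.mem_inter.1 (hTB' hx)).1⟩
    have := (Finset.card_le_card hsub).trans (hsys.2 A hA B hB hAB)
    omega
  calc ∑ A ∈ 𝒜, ((A ∩ W).card.choose 2)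
      = ∑ A ∈ 𝒜, ((A ∩ W).powersetCard 2).card := by
        exact Finset.sum_congr rfl fun A _ => (Finset.card_powersetCard _ _).symm
    _ = (𝒜.biUnion fun A => (A ∩ W).powersetCard 2).card := (Finset.card_biUnion hdisj).symm
    _ ≤ (W.powersetCard 2).card := by
        apply Finset.card_le_card
        intro T hT
        obtain ⟨A, _, hTA⟩ := Finset.mem_biUnion.1 hT
        obtain ⟨hsub, h2⟩ := Finset.mem_powersetCard.1 hTA
        exact Finset.mem_powersetCard.2 ⟨hsub.trans inter_subset_right, h2⟩
    _ = W.card.choose 2 := Finset.card_powersetCard _ _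

lemma main_rec (k q : ℕ) (hk : 3 ≤ k) (hq : k ≤ q)
    (𝒜 : Finset (Finset V)) (hsys : IsSystem 1 q 𝒜) (n : ℕ) :
    ∀ (U : Finset V), Phi k 𝒜 U ≤ n →
    ∃ (N : ℕ) (c : V → ℕ), 0 < N ∧ (∀ v, c v < N) ∧
      (∀ A ∈ 𝒜, ∀ S ⊆ A ∩ U, S.card = k → ∃ u ∈ S, ∃ w ∈ S, c u ≠ c w) ∧
      (N : ℝ) ≤ 4 * (((2^(2*k+1) * k^2 * q^(k-2) : ℕ) : ℝ) * (Phi k 𝒜 U : ℝ))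
          ^ ((1:ℝ)/(2*(k:ℝ)-2)) + 1 := by
  classical
  have hkR : (3:ℝ) ≤ (k:ℝ) := by exact_mod_cast hk
  have hden : (0:ℝ) < 2*(k:ℝ)-2 := by linarith
  set γ : ℝ := (1:ℝ)/(2*(k:ℝ)-2) with hγdef
  have hγpos : 0 < γ := by positivity
  have hγ1 : γ ≤ 1 := by
    rw [hγdef, div_le_one hden]; linarith
  have hcastm : ((2*k-2 : ℕ) : ℝ) = 2*(k:ℝ)-2 := by
    have : 2 ≤ 2*k := by omega
    push_cast [Nat.cast_sub this]
    ring
  have hγm : γ * ((2*k-2 : ℕ) : ℝ) = 1 := by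
    rw [hcastm, hγdef]
    field_simp
    exact div_self (ne_of_gt (by linarith))
  set B : ℕ := 2^(2*k+1) * k^2 * q^(k-2) with hBdef
  have hq0 : 0 < q := by omega
  have hB0 : 0 < B := by
    apply Nat.mul_pos (Nat.mul_pos (Nat.pow_pos (by norm_num)) (by positivity))
    exact Nat.pow_pos hq0
  induction n with
  | zero =>
    intro U hU
    refine ⟨1, fun _ => 0, one_pos, fun v => one_pos, ?_, ?_⟩
    · intro A hA S hS hScard
      exfalso
      have h1 : 1 ≤ (A ∩ U).card.choose k :=
        Nat.choose_pos (hScard ▸ Finset.card_le_card hS)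
      have h2 : (A ∩ U).card.choose k ≤ Phi k 𝒜 U := by
        rw [Phi]
        exact Finset.single_le_sum (f := fun B => ((B ∩ U).card.choose k)) (fun B _ => Nat.zero_le _) hA
      omega
    · have hPhi0 : Phi k 𝒜 U = 0 := by omega
      rw [hPhi0]
      push_cast
      rw [mul_zero, Real.zero_rpow (ne_of_gt hγpos)]
      norm_num
  | succ n ih =>
    intro U hU
    by_cases hle : Phi k 𝒜 U ≤ n
    · exact ih U hle
    have hPhi1 : 1 ≤ Phi k 𝒜 U := by omega
    set Φ : ℕ := Phi k 𝒜 U with hΦdef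
    set x : ℕ := B * Φ with hxdef
    have hx1 : 1 ≤ x := Nat.one_le_iff_ne_zero.2 (by positivity)
    set t : ℕ := ⌈((x:ℝ))^γ⌉₊ with htdef
    have hx1R : (1:ℝ) ≤ (x:ℝ) := by exact_mod_cast hx1
    have hxγ1 : (1:ℝ) ≤ (x:ℝ)^γ := by
      have := Real.rpow_le_rpow zero_le_one hx1R hγpos.le
      rwa [Real.one_rpow] at this
    have ht1 : 1 ≤ t := by
      rw [htdef]
      exact Nat.one_le_ceil_iff.2 (lt_of_lt_of_le zero_lt_one hxγ1)
    have htub : (t:ℝ) ≤ (x:ℝ)^γ + 1 :=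
      (Nat.ceil_lt_add_one (Real.rpow_nonneg (Nat.cast_nonneg x) γ)).le
    have htpow : x ≤ t^(2*k-2) := by
      have e1 : ((x:ℝ)^γ)^(((2*k-2:ℕ)):ℝ) = (x:ℝ) := by
        rw [← Real.rpow_mul (Nat.cast_nonneg x) γ, hγm, Real.rpow_one]
      have e2 : ((x:ℝ)^γ)^(((2*k-2:ℕ)):ℝ) ≤ (t:ℝ)^(((2*k-2:ℕ)):ℝ) :=
        Real.rpow_le_rpow (Real.rpow_nonneg (Nat.cast_nonneg x) γ) (Nat.le_ceil _)
          (Nat.cast_nonneg _)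
      rw [e1, Real.rpow_natCast] at e2
      exact_mod_cast e2
    obtain ⟨c₀, hc₀lt, hc₀M⟩ := exists_coloring k t ht1 (by omega) 𝒜 U
    set M : ℕ := ∑ A ∈ 𝒜, (badS k c₀ U A).card with hMdef
    set W : Finset V := 𝒜.biUnion (fun A => (badS k c₀ U A).biUnion id) with hWdef
    have hWmem : ∀ {v A S}, A ∈ 𝒜 → S ∈ badS k c₀ U A → v ∈ S → v ∈ W := by
      intro v A S hA hS hv
      rw [hWdef]
      exact Finset.mem_biUnion.2 ⟨A, hA, Finset.mem_biUnion.2 ⟨S, hS, hv⟩⟩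
    have hScard_bad : ∀ {A S}, S ∈ badS k c₀ U A → S ⊆ A ∩ U ∧ S.card = k := by
      intro A S hS
      have := (Finset.mem_filter.1 hS).1
      exact Finset.mem_powersetCard.1 this
    have hWcard : W.card ≤ k * M := by
      calc W.card ≤ ∑ A ∈ 𝒜, ((badS k c₀ U A).biUnion id).card := Finset.card_biUnion_le
        _ ≤ ∑ A ∈ 𝒜, ∑ S ∈ badS k c₀ U A, S.card := by
            exact Finset.sum_le_sum fun A _ => Finset.card_biUnion_le
        _ = ∑ A ∈ 𝒜, ∑ S ∈ badS k c₀ U A, k := by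
            refine Finset.sum_congr rfl fun A _ => Finset.sum_congr rfl fun S hS => ?_
            exact (hScard_bad hS).2
        _ = ∑ A ∈ 𝒜, (badS k c₀ U A).card * k := by
            exact Finset.sum_congr rfl fun A _ => by rw [Finset.sum_const, smul_eq_mul]
        _ = M * k := by rw [hMdef, Finset.sum_mul]
        _ = k * M := mul_comm _ _
    set Ψ : ℕ := Phi k 𝒜 W with hΨdef
    have hstep1 : 2 * Ψ ≤ q^(k-2) * ((k*M) * (k*M)) := by
      have hterm : ∀ A ∈ 𝒜, 2 * ((A ∩ W).card.choose k)
          ≤ (2 * (A ∩ W).card.choose 2) * q ^ (k-2) := by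
        intro A hA
        exact choose_upper k _ q (by omega)
          ((Finset.card_le_card inter_subset_left).trans (le_of_eq (hsys.1 A hA)))
      calc 2 * Ψ = ∑ A ∈ 𝒜, 2 * ((A ∩ W).card.choose k) := by
            rw [hΨdef, Phi, Finset.mul_sum]
        _ ≤ ∑ A ∈ 𝒜, (2 * (A ∩ W).card.choose 2) * q ^ (k-2) :=
            Finset.sum_le_sum hterm
        _ = (2 * ∑ A ∈ 𝒜, (A ∩ W).card.choose 2) * q ^ (k-2) := by
            rw [Finset.mul_sum, Finset.sum_mul]
        _ ≤ (2 * W.card.choose 2) * q ^ (k-2) := by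
            exact Nat.mul_le_mul_right _ (Nat.mul_le_mul_left _ (pairs_bound q 𝒜 hsys W))
        _ = (W.card * (W.card - 1)) * q ^ (k-2) := by rw [two_mul_choose_two]
        _ ≤ ((k*M) * (k*M)) * q ^ (k-2) := by
            apply Nat.mul_le_mul_right
            exact Nat.mul_le_mul hWcard (le_trans (Nat.sub_le _ _) hWcard)
        _ = q^(k-2) * ((k*M) * (k*M)) := mul_comm _ _
    have hstep2 : t^(2*k-2) * (M*M) ≤ Φ * Φ := by
      have hsq : (t^(k-1) * M) * (t^(k-1) * M) ≤ Φ * Φ := Nat.mul_le_mul hc₀M hc₀M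
      have hexp : t^(2*k-2) = t^(k-1) * t^(k-1) := by
        rw [← pow_add]; congr 1; omega
      calc t^(2*k-2) * (M*M) = (t^(k-1) * M) * (t^(k-1) * M) := by rw [hexp]; ring
        _ ≤ Φ * Φ := hsq
    have hkey : (2^(2*k+2) * Ψ) * (k^2 * q^(k-2) * Φ) ≤ Φ * (k^2 * q^(k-2) * Φ) := by
      calc (2^(2*k+2) * Ψ) * (k^2 * q^(k-2) * Φ) = (2 * Ψ) * (B * Φ) := by
            rw [hBdef, pow_succ]; ring
        _ ≤ (2 * Ψ) * t^(2*k-2) := Nat.mul_le_mul_left _ htpow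
        _ ≤ (q^(k-2) * ((k*M) * (k*M))) * t^(2*k-2) := Nat.mul_le_mul_right _ hstep1
        _ = (k^2 * q^(k-2)) * (t^(2*k-2) * (M*M)) := by ring
        _ ≤ (k^2 * q^(k-2)) * (Φ * Φ) := Nat.mul_le_mul_left _ hstep2
        _ = Φ * (k^2 * q^(k-2) * Φ) := by ring
    have hPpos : 0 < k^2 * q^(k-2) * Φ := by positivity
    have hdec : 2^(2*k+2) * Ψ ≤ Φ := Nat.le_of_mul_le_mul_right hkey hPpos
    have hΨn : Ψ ≤ n := by
      have h2 : 2 * Ψ ≤ 2^(2*k+2) * Ψ := by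
        apply Nat.mul_le_mul_right
        have : (2:ℕ)^1 ≤ 2^(2*k+2) := Nat.pow_le_pow_right (by norm_num) (by omega)
        simpa using this
      omega
    obtain ⟨N', c', hN'0, hc'lt, hc'prop, hc'bd⟩ := ih W hΨn
    refine ⟨t + N', fun v => if v ∈ W then t + c' v else c₀ v, by omega, ?_, ?_, ?_⟩
    · intro v
      by_cases hv : v ∈ W
      · simp only [hv, if_pos]
        have := hc'lt v; omega
      · simp only [hv, if_neg, ite_false]
        have := hc₀lt v; omega
    · intro A hA S hS hScard
      by_contra hcon
      push_neg at hcon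
      have hSne : S.Nonempty := Finset.card_pos.1 (by omega)
      obtain ⟨v₀, hv₀⟩ := hSne
      by_cases hWS : ∃ w ∈ S, w ∉ W
      · obtain ⟨w₀, hw₀S, hw₀W⟩ := hWS
        have hallnot : ∀ v ∈ S, v ∉ W := by
          intro v hv hvW
          have hce := hcon v hv w₀ hw₀S
          simp only [hvW, if_pos, hw₀W, if_neg, ite_false] at hce
          have := hc₀lt w₀
          omega
        have hmono : monoOn c₀ S := by
          intro u hu w hw
          have hce := hcon u hu w hw
          simpa only [hallnot u hu, hallnot w hw, if_neg, ite_false] using hce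
        have hSbad : S ∈ badS k c₀ U A :=
          Finset.mem_filter.2 ⟨Finset.mem_powersetCard.2 ⟨hS, hScard⟩, hmono⟩
        exact hallnot v₀ hv₀ (hWmem hA hSbad hv₀)
      · push_neg at hWS
        have hSAW : S ⊆ A ∩ W := fun v hv =>
          Finset.mem_inter.2 ⟨(Finset.mem_inter.1 (hS hv)).1, hWS v hv⟩
        obtain ⟨u, hu, w, hw, hne⟩ := hc'prop A hA S hSAW hScard
        apply hne
        have hce := hcon u hu w hw
        simp only [hWS u hu, hWS w hw, if_pos] at hce
        omega
    · -- numeric bound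
      have hBR : (0:ℝ) ≤ (B:ℝ) := Nat.cast_nonneg _
      have hxcast : ((x:ℕ):ℝ) = (B:ℝ) * (Φ:ℝ) := by rw [hxdef]; push_cast; ring
      have hdecR : (2:ℝ)^(2*k+2) * (Ψ:ℝ) ≤ (Φ:ℝ) := by exact_mod_cast hdec
      have hBA : (B:ℝ) * (Ψ:ℝ) ≤ ((B:ℝ) * (Φ:ℝ)) / 2^(2*k+2) := by
        rw [le_div_iff₀ (by positivity)]
        calc (B:ℝ) * (Ψ:ℝ) * 2^(2*k+2) = (B:ℝ) * ((2:ℝ)^(2*k+2) * (Ψ:ℝ)) := by ring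
          _ ≤ (B:ℝ) * (Φ:ℝ) := mul_le_mul_of_nonneg_left hdecR hBR
      have h2γ : (2:ℝ) ≤ ((2:ℝ)^(2*k+2))^γ := by
        have e : ((2:ℝ)^(2*k+2))^γ = (2:ℝ)^(((2*k+2:ℕ):ℝ) * γ) := by
          rw [← Real.rpow_natCast 2 (2*k+2), ← Real.rpow_mul (by norm_num : (0:ℝ) ≤ 2)]
        rw [e]
        have h1 : (1:ℝ) ≤ ((2*k+2:ℕ):ℝ) * γ := by
          rw [hγdef, mul_one_div, le_div_iff₀ hden]
          push_cast; linarith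
        calc (2:ℝ) = 2^(1:ℝ) := (Real.rpow_one 2).symm
          _ ≤ 2^(((2*k+2:ℕ):ℝ)*γ) := Real.rpow_le_rpow_of_exponent_le one_le_two h1
      have hrp : ((B:ℝ) * (Ψ:ℝ))^γ ≤ ((B:ℝ)*(Φ:ℝ))^γ / 2 := by
        calc ((B:ℝ)*(Ψ:ℝ))^γ ≤ (((B:ℝ)*(Φ:ℝ)) / 2^(2*k+2))^γ :=
              Real.rpow_le_rpow (by positivity) hBA hγpos.le
          _ = ((B:ℝ)*(Φ:ℝ))^γ / ((2:ℝ)^(2*k+2))^γ :=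
              Real.div_rpow (by positivity) (by positivity) γ
          _ ≤ ((B:ℝ)*(Φ:ℝ))^γ / 2 := by
              apply div_le_div_of_nonneg_left (Real.rpow_nonneg (by positivity) _) two_pos h2γ
      have ha1 : (1:ℝ) ≤ ((B:ℝ)*(Φ:ℝ))^γ := by rw [← hxcast]; exact hxγ1
      rw [← hΨdef] at hc'bd
      rw [hxcast] at htub
      rw [Nat.cast_add]
      linarith [htub, hc'bd, hrp, ha1]

end Aux

theorem stmt6 (k : ℕ) (hk : 3 ≤ k) :
    ∃ C : ℝ, 0 < C ∧
      ∀ (q e : ℕ), k ≤ q → 1 ≤ e →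
      ∀ (V : Type) [DecidableEq V] (𝒜 : Finset (Finset V)),
        IsSystem 1 q 𝒜 → 𝒜.card = e →
        ∃ n : ℕ, (n : ℝ) ≤ C * (e : ℝ) ^ ((1 : ℝ) / (2 * k - 2)) * q ∧
          SysColorable k n 𝒜 := by
  classical
  refine ⟨(2:ℝ)^(2*k+3) * (k:ℝ)^2 + 1, by positivity, ?_⟩
  intro q e hq he V _ 𝒜 hsys hcard
  have hkR : (3:ℝ) ≤ (k:ℝ) := by exact_mod_cast hk
  have hden : (0:ℝ) < 2*(k:ℝ)-2 := by linarith
  set γ : ℝ := (1:ℝ)/(2*(k:ℝ)-2) with hγdef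
  have hγpos : 0 < γ := by positivity
  have hγ1 : γ ≤ 1 := by rw [hγdef, div_le_one hden]; linarith
  set U₀ : Finset V := 𝒜.sup id with hU₀def
  have hAU : ∀ A ∈ 𝒜, A ∩ U₀ = A := by
    intro A hA
    exact Finset.inter_eq_left.2 (Finset.le_sup (f := id) hA)
  have hPhi0 : Phi k 𝒜 U₀ = e * q.choose k := by
    rw [Phi, Finset.sum_congr rfl (fun A hA => by rw [hAU A hA, hsys.1 A hA]),
      Finset.sum_const, smul_eq_mul, hcard]
  obtain ⟨N, c, hN0, hclt, hprop, hbd⟩ :=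
    main_rec k q hk hq 𝒜 hsys (Phi k 𝒜 U₀) U₀ le_rfl
  refine ⟨N, ?_, ⟨fun v => ⟨c v, hclt v⟩, ?_⟩⟩
  · -- numeric bound
    set D : ℕ := 2^(2*k+1) * k^2 with hDdef
    have hD1 : 1 ≤ D := by
      rw [hDdef]
      exact Nat.one_le_iff_ne_zero.2 (by positivity)
    have hq0 : 0 < q := by omega
    have hnat : 2^(2*k+1) * k^2 * q^(k-2) * (e * q.choose k) ≤ D * e * q^(2*k-2) := by
      calc 2^(2*k+1) * k^2 * q^(k-2) * (e * q.choose k)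
          ≤ 2^(2*k+1) * k^2 * q^(k-2) * (e * q^k) := by
            exact Nat.mul_le_mul_left _ (Nat.mul_le_mul_left _ (Nat.choose_le_pow _ _))
        _ = D * e * (q^(k-2) * q^k) := by rw [hDdef]; ring
        _ = D * e * q^(2*k-2) := by rw [← pow_add]; congr 2; omega
    have hcastm : ((2*k-2 : ℕ) : ℝ) = 2*(k:ℝ)-2 := by
      have h2 : 2 ≤ 2*k := by omega
      push_cast [Nat.cast_sub h2]; ring
    have hbd2 : (((2^(2*k+1) * k^2 * q^(k-2) : ℕ) : ℝ) * ((Phi k 𝒜 U₀ : ℕ) : ℝ))^γ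
        ≤ (D:ℝ) * (e:ℝ)^γ * (q:ℝ) := by
      have hcc : (((2^(2*k+1) * k^2 * q^(k-2) : ℕ) : ℝ) * ((Phi k 𝒜 U₀ : ℕ) : ℝ))
          ≤ ((D * e * q^(2*k-2) : ℕ) : ℝ) := by
        rw [hPhi0, ← Nat.cast_mul]
        exact_mod_cast hnat
      calc (((2^(2*k+1) * k^2 * q^(k-2) : ℕ) : ℝ) * ((Phi k 𝒜 U₀ : ℕ) : ℝ))^γ
          ≤ (((D * e * q^(2*k-2) : ℕ) : ℝ))^γ :=
            Real.rpow_le_rpow (by positivity) hcc hγpos.le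
        _ = ((D:ℝ) * (e:ℝ) * ((q:ℝ)^(2*k-2:ℕ)))^γ := by push_cast; ring_nf
        _ = (D:ℝ)^γ * (e:ℝ)^γ * (((q:ℝ)^(2*k-2:ℕ)))^γ := by
            rw [Real.mul_rpow (by positivity) (by positivity),
              Real.mul_rpow (by positivity) (by positivity)]
        _ ≤ (D:ℝ) * (e:ℝ)^γ * (q:ℝ) := by
            have h1 : (D:ℝ)^γ ≤ (D:ℝ) := by
              have hD1R : (1:ℝ) ≤ (D:ℝ) := by exact_mod_cast hD1
              have := Real.rpow_le_rpow_of_exponent_le hD1R hγ1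
              rwa [Real.rpow_one] at this
            have h2 : (((q:ℝ)^(2*k-2:ℕ)))^γ = (q:ℝ) := by
              rw [← Real.rpow_natCast (q:ℝ) (2*k-2), ← Real.rpow_mul (Nat.cast_nonneg q),
                hcastm]
              rw [hγdef]
              rw [mul_one_div, div_self (ne_of_gt hden), Real.rpow_one]
            rw [h2]
            apply mul_le_mul_of_nonneg_right (mul_le_mul_of_nonneg_right h1 ?_) (Nat.cast_nonneg q)
            exact Real.rpow_nonneg (Nat.cast_nonneg e) γ
    have heγ1 : (1:ℝ) ≤ (e:ℝ)^γ := by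
      have he1 : (1:ℝ) ≤ (e:ℝ) := by exact_mod_cast he
      have := Real.rpow_le_rpow zero_le_one he1 hγpos.le
      rwa [Real.one_rpow] at this
    have hq1 : (1:ℝ) ≤ (q:ℝ) := by
      have : 1 ≤ q := by omega
      exact_mod_cast this
    have hDc : 4 * (D:ℝ) = (2:ℝ)^(2*k+3) * (k:ℝ)^2 := by
      have h4 : (2:ℝ)^(2*k+3) = (2:ℝ)^(2*k+1) * 4 := by rw [pow_add, pow_add]; ring
      rw [hDdef, h4]
      push_cast
      ring
    calc (N:ℝ) ≤ 4 * ((((2^(2*k+1) * k^2 * q^(k-2) : ℕ) : ℝ)) * ((Phi k 𝒜 U₀ : ℕ) : ℝ))^γ + 1 := hbd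
      _ ≤ 4 * ((D:ℝ) * (e:ℝ)^γ * (q:ℝ)) + 1 := by linarith [hbd2]
      _ ≤ 4 * ((D:ℝ) * (e:ℝ)^γ * (q:ℝ)) + (e:ℝ)^γ * (q:ℝ) := by nlinarith [heγ1, hq1]
      _ = ((2:ℝ)^(2*k+3) * (k:ℝ)^2 + 1) * (e:ℝ)^γ * (q:ℝ) := by rw [← hDc]; ring
  · -- coloring
    intro A hA S hS hScard
    have hS' : S ⊆ A ∩ U₀ := by rw [hAU A hA]; exact hS
    obtain ⟨u, hu, w, hw, hne⟩ := hprop A hA S hS' hScard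
    exact ⟨u, hu, w, hw, fun h => hne (congrArg Fin.val h)⟩
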